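/- Let z: [t₀,T] → ℝ² be differentiable with derivative a = z', and let p(t) = ∇_a L(z(t), a(t)) satisfy the Euler–Lagrange equation p'(t) = ∇_z L(z(t), a(t)). If L is 2-homogeneous in (z,a), then ∫_{t₀}^{T} L(z(t), a(t)) dt = (1/2)(p(T) ⋅ z(T) − p(t₀) ⋅ z(t₀)). -/

import Mathlib

open Real intervalIntegral

lemma inner_gradient_eq {F : Type*} [NormedAddCommGroup F] [InnerProductSpace ℝ F]
    [CompleteSpace F] (f : F → ℝ) (x v : F) :
    (inner ℝ (gradient f x) v : ℝ) = fderiv ℝ f x v := by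
  rw [gradient, InnerProductSpace.toDual_symm_apply]

theorem stmt_5 (t₀ T : ℝ) (ht : t₀ < T)
    (L : EuclideanSpace ℝ (Fin 2) → EuclideanSpace ℝ (Fin 2) → ℝ)
    (hL : Differentiable ℝ (fun p : EuclideanSpace ℝ (Fin 2) × EuclideanSpace ℝ (Fin 2) => L p.1 p.2))
    (hhom : ∀ (lam : ℝ) (z a : EuclideanSpace ℝ (Fin 2)),
      L (lam • z) (lam • a) = lam ^ 2 * L z a)
    (z p : ℝ → EuclideanSpace ℝ (Fin 2))
    (hz : ContDiff ℝ 1 z) (hp : ContDiff ℝ 1 p)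
    (hpdef : ∀ t, p t = gradient (fun a => L (z t) a) (deriv z t))
    (hEL : ∀ t, deriv p t = gradient (fun w => L w (deriv z t)) (z t)) :
    ∫ t in t₀..T, L (z t) (deriv z t) =
      (1 / 2) * ((inner ℝ (p T) (z T) : ℝ) - (inner ℝ (p t₀) (z t₀) : ℝ)) := by
  set F : EuclideanSpace ℝ (Fin 2) × EuclideanSpace ℝ (Fin 2) → ℝ := fun q => L q.1 q.2 with hF
  -- Euler's identity for 2-homogeneous functions
  have euler : ∀ (w a : EuclideanSpace ℝ (Fin 2)),
      (inner ℝ (gradient (fun x => L x a) w) w : ℝ)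
        + (inner ℝ (gradient (fun b => L w b) a) a : ℝ) = 2 * L w a := by
    intro w a
    have hFd : DifferentiableAt ℝ F (w, a) := hL (w, a)
    -- derivative of λ ↦ F (λ•w, λ•a) at 1
    have hc : HasDerivAt (fun lam : ℝ =>
        ((lam • w, lam • a) : EuclideanSpace ℝ (Fin 2) × EuclideanSpace ℝ (Fin 2))) (w, a) 1 := by
      simpa using (((hasDerivAt_id (1:ℝ)).smul_const w).prodMk
        ((hasDerivAt_id (1:ℝ)).smul_const a))
    have h1 : HasDerivAt (fun lam : ℝ => F (lam • w, lam • a))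
        (fderiv ℝ F (w, a) (w, a)) 1 := by
      have hFd' : HasFDerivAt F (fderiv ℝ F (w, a)) ((1:ℝ) • w, (1:ℝ) • a) := by
        simpa using hFd.hasFDerivAt
      exact hFd'.comp_hasDerivAt 1 hc
    have h2 : HasDerivAt (fun lam : ℝ => lam ^ 2 * L w a) (2 * L w a) 1 := by
      have := (hasDerivAt_pow 2 (1:ℝ)).mul_const (L w a)
      simpa using this
    have heq : (fun lam : ℝ => F (lam • w, lam • a)) = fun lam : ℝ => lam ^ 2 * L w a := by
      funext lam; exact hhom lam w a
    have hkey : fderiv ℝ F (w, a) (w, a) = 2 * L w a := by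
      rw [heq] at h1
      exact h1.unique h2
    -- partial derivatives
    have hleft : HasFDerivAt (fun x : EuclideanSpace ℝ (Fin 2) => L x a)
        ((fderiv ℝ F (w, a)).comp (ContinuousLinearMap.inl ℝ (EuclideanSpace ℝ (Fin 2)) (EuclideanSpace ℝ (Fin 2)))) w :=
      by have := hFd.hasFDerivAt.comp w (hasFDerivAt_prodMk_left (𝕜 := ℝ) w a); exact this
    have hright : HasFDerivAt (fun b : EuclideanSpace ℝ (Fin 2) => L w b)
        ((fderiv ℝ F (w, a)).comp (ContinuousLinearMap.inr ℝ (EuclideanSpace ℝ (Fin 2)) (EuclideanSpace ℝ (Fin 2)))) a :=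
      hFd.hasFDerivAt.comp a (hasFDerivAt_prodMk_right w a)
    have e1 : (inner ℝ (gradient (fun x => L x a) w) w : ℝ) = fderiv ℝ F (w, a) (w, 0) := by
      rw [inner_gradient_eq, hleft.fderiv]; rfl
    have e2 : (inner ℝ (gradient (fun b => L w b) a) a : ℝ) = fderiv ℝ F (w, a) (0, a) := by
      rw [inner_gradient_eq, hright.fderiv]; rfl
    rw [e1, e2, ← ContinuousLinearMap.map_add]
    simpa using hkey
  -- the function t ↦ ⟪p t, z t⟫ has derivative 2 L(z t, z' t)
  have hzd : ∀ t, HasDerivAt z (deriv z t) t :=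
    fun t => ((hz.differentiable one_ne_zero) t).hasDerivAt
  have hpd : ∀ t, HasDerivAt p (deriv p t) t :=
    fun t => ((hp.differentiable one_ne_zero) t).hasDerivAt
  have hderiv : ∀ t, HasDerivAt (fun t => (inner ℝ (p t) (z t) : ℝ))
      (2 * L (z t) (deriv z t)) t := by
    intro t
    have := (hpd t).inner ℝ (hzd t)
    have hval : (inner ℝ (p t) (deriv z t) : ℝ) + (inner ℝ (deriv p t) (z t) : ℝ)
        = 2 * L (z t) (deriv z t) := by
      rw [hpdef t, hEL t]
      have := euler (z t) (deriv z t)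
      linarith
    rwa [hval] at this
  have hcont : Continuous (fun t => L (z t) (deriv z t)) := by
    have : Continuous (fun t => ((z t, deriv z t) : EuclideanSpace ℝ (Fin 2) × EuclideanSpace ℝ (Fin 2))) :=
      (hz.continuous).prodMk (hz.continuous_deriv le_rfl)
    exact hL.continuous.comp this
  have hint : IntervalIntegrable (fun t => 2 * L (z t) (deriv z t)) MeasureTheory.volume t₀ T :=
    (continuous_const.mul hcont).intervalIntegrable _ _
  have hftc := intervalIntegral.integral_eq_sub_of_hasDerivAt
    (f := fun t => (inner ℝ (p t) (z t) : ℝ))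
    (fun t _ => hderiv t) hint
  have hmul : ∫ t in t₀..T, 2 * L (z t) (deriv z t)
      = 2 * ∫ t in t₀..T, L (z t) (deriv z t) := intervalIntegral.integral_const_mul _ _
  rw [hmul] at hftc
  linarith
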